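/- Let A = Λ_ℚ(x_1,…,x_n) be a rational exterior algebra on generators of odd degrees and let B = ⊕_{m≥0} B^m be a finite-dimensional nonnegatively graded ℚ-algebra with B^0 = ℚ·1 and B^m = 0 for all odd m. Give A ⊗_ℚ B the tensor-product grading, and let F be a graded ring endomorphism of A ⊗ B. Let ι_A : A → A⊗B be a ↦ a⊗1 and π_A : A⊗B → A the ℚ-linear map determined by a⊗b ↦ ε_B(b)·a, where ε_B : B → ℚ is the projection onto the degree-0 component; define ι_B : B → A⊗B, b ↦ 1⊗b, and π_B : A⊗B → B via the projection ε_A : A → ℚ analogously. Then tr(F) = tr(π_A ∘ F ∘ ι_A) · tr(π_B ∘ F ∘ ι_B). -/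

import Mathlib

noncomputable section

namespace Paper

open scoped TensorProduct

variable {A B : Type*} [Ring A] [Algebra ℚ A] [Ring B] [Algebra ℚ B]

/-- The tensor-product grading on `A ⊗[ℚ] B`: `(A ⊗ B)^m = ⊕_{p+q=m} A^p ⊗ B^q`. -/
def tensorGrading (𝒜 : ℕ → Submodule ℚ A) (ℬ : ℕ → Submodule ℚ B) (m : ℕ) :
    Submodule ℚ (A ⊗[ℚ] B) :=
  ⨆ p : Fin (m + 1), LinearMap.range (TensorProduct.mapIncl (𝒜 p) (ℬ (m - p)))

/-- `ι_A : A → A ⊗ B`, `a ↦ a ⊗ 1`. -/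
def inclLeft : A →ₗ[ℚ] A ⊗[ℚ] B := (Algebra.TensorProduct.includeLeft : A →ₐ[ℚ] A ⊗[ℚ] B).toLinearMap

/-- `ι_B : B → A ⊗ B`, `b ↦ 1 ⊗ b`. -/
def inclRight : B →ₗ[ℚ] A ⊗[ℚ] B := (Algebra.TensorProduct.includeRight : B →ₐ[ℚ] A ⊗[ℚ] B).toLinearMap

/-- `π_A : A ⊗ B → A`, `a ⊗ b ↦ ε_B(b) · a`, where `ε_B : B → ℚ` is the augmentation. -/
def projLeft (εB : B →ₗ[ℚ] ℚ) : A ⊗[ℚ] B →ₗ[ℚ] A :=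
  (TensorProduct.rid ℚ A).toLinearMap ∘ₗ TensorProduct.map LinearMap.id εB

/-- `π_B : A ⊗ B → B`, `a ⊗ b ↦ ε_A(a) · b`, where `ε_A : A → ℚ` is the augmentation. -/
def projRight (εA : A →ₗ[ℚ] ℚ) : A ⊗[ℚ] B →ₗ[ℚ] B :=
  (TensorProduct.lid ℚ B).toLinearMap ∘ₗ TensorProduct.map εA LinearMap.id

end Paper

set_option maxHeartbeats 4000000
set_option synthInstance.maxHeartbeats 400000

section Auxiliary
namespace Paper
open Submodule ExteriorAlgebra TensorProduct Module

section Generic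


open Submodule

theorem repr_eq_zero_of_mem_span {R M ι : Type*} [CommRing R] [AddCommGroup M] [Module R M]
    (b : Basis ι R M) {s : Set ι} {z : M} (hz : z ∈ span R (b '' s)) {j : ι} (hj : j ∉ s) :
    b.repr z j = 0 := by
  induction hz using Submodule.span_induction with
  | mem x hx =>
    obtain ⟨i, hi, rfl⟩ := hx
    classical
    rw [b.repr_self, Finsupp.single_apply, if_neg]
    intro h; exact hj (h ▸ hi)
  | zero => simp
  | add x y _ _ hx hy => simp [hx, hy]
  | smul c x _ hx => simp [hx]

theorem mem_span_of_repr_eq_zero {R M ι : Type*} [CommRing R] [AddCommGroup M] [Module R M]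
    (b : Basis ι R M) {s : Set ι} {z : M} (h : ∀ j, j ∉ s → b.repr z j = 0) :
    z ∈ span R (b '' s) := by
  rw [← b.linearCombination_repr z, Finsupp.linearCombination_apply]
  refine Submodule.finsuppSum_mem _ _ _ _ fun i hi => ?_
  have his : i ∈ s := by
    by_contra hns
    exact hi (h i hns)
  exact Submodule.smul_mem _ _ (Submodule.subset_span ⟨i, his, rfl⟩)

theorem subgrading_mem {M : Type*} [AddCommGroup M] [Module ℚ M]
    (𝒢 : ℕ → Submodule ℚ M) [DirectSum.Decomposition 𝒢]
    (N : ℕ → Submodule ℚ M) (hle : ∀ p, N p ≤ 𝒢 p) (htop : ⨆ p, N p = ⊤)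
    {p : ℕ} {z : M} (hz : z ∈ 𝒢 p) : z ∈ N p := by
  have hall : ∀ w : M, ((DirectSum.decompose 𝒢 w p : M) ∈ N p) := by
    intro w
    have hw : w ∈ ⨆ q, N q := htop ▸ mem_top
    induction hw using Submodule.iSup_induction' with
    | mem q w hw =>
      by_cases hqp : q = p
      · subst hqp
        rw [DirectSum.decompose_of_mem_same 𝒢 (hle q hw)]
        exact hw
      · rw [DirectSum.decompose_of_mem_ne 𝒢 (hle q hw) hqp]
        exact zero_mem _
    | zero => simp
    | add x y _ _ hx hy =>
      rw [DirectSum.decompose_add, DirectSum.add_apply, Submodule.coe_add]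
      exact add_mem hx hy
  have := hall z
  rwa [DirectSum.decompose_of_mem_same 𝒢 hz] at this


end Generic

section TensorSpan
variable {A B : Type*} [Ring A] [Algebra ℚ A] [Ring B] [Algebra ℚ B]

open Submodule TensorProduct



theorem tmul_mem_span_tensor {M N : Type*} [AddCommGroup M] [Module ℚ M]
    [AddCommGroup N] [Module ℚ N] {ι κ : Type*} (bM : Basis ι ℚ M) (bN : Basis κ ℚ N)
    {s : Set ι} {t : Set κ} {a : M} {b : N}
    (ha : a ∈ span ℚ (bM '' s)) (hb : b ∈ span ℚ (bN '' t)) :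
    a ⊗ₜ[ℚ] b ∈ span ℚ ((bM.tensorProduct bN) '' (s ×ˢ t)) := by
  induction ha using Submodule.span_induction with
  | mem x hx =>
    obtain ⟨i, hi, rfl⟩ := hx
    induction hb using Submodule.span_induction with
    | mem y hy =>
      obtain ⟨j, hj, rfl⟩ := hy
      exact subset_span ⟨(i, j), ⟨hi, hj⟩, (Basis.tensorProduct_apply bM bN i j)⟩
    | zero => rw [tmul_zero]; exact zero_mem _
    | add x y _ _ hx hy => rw [tmul_add]; exact add_mem hx hy
    | smul c x _ hx => rw [tmul_smul]; exact smul_mem _ _ hx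
  | zero => rw [zero_tmul]; exact zero_mem _
  | add x y _ _ hx hy => rw [add_tmul]; exact add_mem hx hy
  | smul c x _ hx => rw [← smul_tmul']; exact smul_mem _ _ hx

theorem tmul_mem_tensorGrading (𝒜 : ℕ → Submodule ℚ A) (ℬ : ℕ → Submodule ℚ B)
    {p q : ℕ} {a : A} {b : B} (ha : a ∈ 𝒜 p) (hb : b ∈ ℬ q) :
    a ⊗ₜ[ℚ] b ∈ tensorGrading 𝒜 ℬ (p + q) := by
  apply Submodule.mem_iSup_of_mem (⟨p, by omega⟩ : Fin (p + q + 1))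
  have hq : p + q - p = q := by omega
  refine ⟨(⟨a, ha⟩ : 𝒜 p) ⊗ₜ[ℚ] (⟨b, by rw [hq]; exact hb⟩ : ℬ (p + q - p)), rfl⟩

theorem tensorGrading_le_span {ι κ : Type*} (bA : Basis ι ℚ A) (bB : Basis κ ℚ B)
    (𝒜 : ℕ → Submodule ℚ A) (ℬ : ℕ → Submodule ℚ B)
    (dA : ι → ℕ) (dB : κ → ℕ)
    (hA : ∀ p, ∀ a ∈ 𝒜 p, a ∈ span ℚ (bA '' {i | dA i = p}))
    (hB : ∀ q, ∀ b ∈ ℬ q, b ∈ span ℚ (bB '' {k | dB k = q}))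
    (m : ℕ) {z : A ⊗[ℚ] B} (hz : z ∈ tensorGrading 𝒜 ℬ m) :
    z ∈ span ℚ ((bA.tensorProduct bB) '' {ik | dA ik.1 + dB ik.2 = m}) := by
  induction hz using Submodule.iSup_induction' with
  | mem p w hw =>
    obtain ⟨y, rfl⟩ := hw
    induction y with
    | zero => rw [map_zero]; exact zero_mem _
    | tmul x y =>
      obtain ⟨a, ha⟩ := x
      obtain ⟨b, hb⟩ := y
      have : TensorProduct.mapIncl (𝒜 p) (ℬ (m - p)) (⟨a, ha⟩ ⊗ₜ[ℚ] ⟨b, hb⟩) = a ⊗ₜ[ℚ] b := rfl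
      rw [this]
      have hmem := tmul_mem_span_tensor bA bB (hA p a ha) (hB (m - ↑p) b hb)
      refine span_mono (Set.image_mono ?_) hmem
      rintro ⟨i, k⟩ ⟨hi, hk⟩
      simp only [Set.mem_setOf_eq] at hi hk ⊢
      have : (p : ℕ) ≤ m := by omega
      omega
    | add x y hx hy => rw [map_add]; exact add_mem hx hy
  | zero => exact zero_mem _
  | add x y _ _ hx hy => exact add_mem hx hy

end TensorSpan


open Submodule ExteriorAlgebra

variable (n : ℕ)

/-- the `i`-th generator of the exterior algebra -/
def gen (i : Fin n) : ExteriorAlgebra ℚ (Fin n → ℚ) :=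
  ExteriorAlgebra.ι ℚ (Pi.single i 1)

/-- monomial indexed by a list -/
def wl (l : List (Fin n)) : ExteriorAlgebra ℚ (Fin n → ℚ) := (l.map (gen n)).prod

/-- monomial indexed by a finset -/
def xS (T : Finset (Fin n)) : ExteriorAlgebra ℚ (Fin n → ℚ) := wl n (T.sort (·≤·))

@[simp] lemma wl_nil : wl n [] = 1 := rfl

@[simp] lemma wl_cons (t : Fin n) (l : List (Fin n)) :
    wl n (t :: l) = gen n t * wl n l := by simp [wl]

lemma xS_empty : xS n ∅ = 1 := by simp [xS, Finset.sort_empty]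

lemma xS_singleton (i : Fin n) : xS n {i} = gen n i := by
  simp [xS, Finset.sort_singleton, wl]

lemma wl_eq_xS (l : List (Fin n)) (hl : l.Pairwise (· < ·)) :
    wl n l = xS n l.toFinset := by
  unfold xS
  rw [(List.toFinset_sort (· ≤ ·) hl.nodup).mpr (hl.imp le_of_lt)]

/-- sign auxiliary -/
def sg (i : Fin n) (T : Finset (Fin n)) : ℚ := (-1) ^ (T.filter (· < i)).card

/-- wedging operator on the model space -/
def lop (i : Fin n) : (Finset (Fin n) →₀ ℚ) →ₗ[ℚ] (Finset (Fin n) →₀ ℚ) :=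
  Finsupp.lift _ ℚ _ fun T =>
    if i ∈ T then 0 else sg n i T • Finsupp.single (insert i T) 1

lemma lop_single (i : Fin n) (T : Finset (Fin n)) (c : ℚ) :
    lop n i (Finsupp.single T c) =
      if i ∈ T then 0 else (c * sg n i T) • Finsupp.single (insert i T) 1 := by
  rw [lop, Finsupp.lift_apply, Finsupp.sum_single_index (by simp)]
  split <;> simp [mul_smul]

lemma lop_lop_same (i : Fin n) (z : Finset (Fin n) →₀ ℚ) : lop n i (lop n i z) = 0 := by
  induction z using Finsupp.induction_linear with
  | zero => simp
  | add f g hf hg => simp [hf, hg]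
  | single T c =>
    rw [lop_single]
    split
    · simp
    · rw [map_smul, lop_single, if_pos (Finset.mem_insert_self i T), smul_zero]

lemma filter_insert_card {i j : Fin n} (hij : j ≠ i) (T : Finset (Fin n)) (hj : j ∉ T) :
    ((insert j T).filter (· < i)).card =
      (T.filter (· < i)).card + (if j < i then 1 else 0) := by
  rw [Finset.filter_insert]
  split
  · rw [Finset.card_insert_of_notMem (fun h => hj (Finset.mem_of_mem_filter _ h))]
  · simp

lemma lop_anticomm {i j : Fin n} (hij : i ≠ j) (z : Finset (Fin n) →₀ ℚ) :
    lop n i (lop n j z) + lop n j (lop n i z) = 0 := by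
  induction z using Finsupp.induction_linear with
  | zero => simp
  | add f g hf hg =>
    rw [map_add, map_add, map_add, map_add]
    rw [show ∀ a b c e : Finset (Fin n) →₀ ℚ, a + b + (c + e) = (a + c) + (b + e) by intros; abel]
    rw [hf, hg, add_zero]
  | single T c =>
    by_cases hiT : i ∈ T <;> by_cases hjT : j ∈ T
    · rw [lop_single, if_pos hjT, lop_single, if_pos hiT]; simp
    · rw [lop_single n j T, if_neg hjT, lop_single n i T, if_pos hiT, map_zero, map_smul,
        lop_single, if_pos (Finset.mem_insert_of_mem hiT)]
      simp
    · rw [lop_single n j T, if_pos hjT, lop_single n i T, if_neg hiT, map_zero, map_smul,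
        lop_single, if_pos (Finset.mem_insert_of_mem hjT)]
      simp
    · have hii : i ∉ insert j T := by
        rw [Finset.mem_insert]; rintro (h | h); exacts [hij h, hiT h]
      have hjj : j ∉ insert i T := by
        rw [Finset.mem_insert]; rintro (h | h); exacts [hij h.symm, hjT h]
      rw [lop_single n j T, if_neg hjT, lop_single n i T, if_neg hiT, map_smul, map_smul,
        lop_single, lop_single, if_neg hii, if_neg hjj, smul_smul, smul_smul,
        Finset.insert_comm, ← add_smul]
      apply smul_eq_zero_of_left
      have h1 := filter_insert_card n (show j ≠ i from fun h => hij h.symm) T hjT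
      have h2 := filter_insert_card n hij T hiT
      unfold sg
      rw [h1, h2, pow_add, pow_add]
      rcases hij.lt_or_gt with h | h
      · rw [if_neg (asymm h), if_pos h]; ring
      · rw [if_pos h, if_neg (asymm h)]; ring

/-- the candidate for lifting `ι` to the model space -/
def phi : (Fin n → ℚ) →ₗ[ℚ] Module.End ℚ (Finset (Fin n) →₀ ℚ) :=
  ∑ i : Fin n, (LinearMap.proj i).smulRight (lop n i)

lemma phi_apply (v : Fin n → ℚ) : phi n v = ∑ i : Fin n, v i • lop n i := by
  simp [phi]

lemma phi_sq (v : Fin n → ℚ) : phi n v * phi n v = 0 := by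
  rw [phi_apply, Finset.sum_mul_sum]
  have hterm : ∀ i j : Fin n,
      (v i • lop n i) * (v j • lop n j) + (v j • lop n j) * (v i • lop n i) = 0 := by
    intro i j
    rcases eq_or_ne i j with rfl | hij
    · rw [smul_mul_smul_comm]
      have : lop n i * lop n i = 0 := LinearMap.ext fun z => lop_lop_same n i z
      rw [this, smul_zero, zero_add]
    · rw [smul_mul_smul_comm, smul_mul_smul_comm, mul_comm (v j) (v i), ← smul_add]
      have : lop n i * lop n j + lop n j * lop n i = 0 :=
        LinearMap.ext fun z => lop_anticomm n hij z
      rw [this, smul_zero]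
  have h2 : (∑ i : Fin n, ∑ j : Fin n, (v i • lop n i) * (v j • lop n j)) +
      (∑ i : Fin n, ∑ j : Fin n, (v i • lop n i) * (v j • lop n j)) = 0 := by
    nth_rewrite 1 [Finset.sum_comm]
    rw [← Finset.sum_add_distrib]
    refine Finset.sum_eq_zero fun i _ => ?_
    rw [← Finset.sum_add_distrib]
    exact Finset.sum_eq_zero fun j _ => hterm j i
  have h3 : (2 : ℚ) • (∑ i : Fin n, ∑ j : Fin n, (v i • lop n i) * (v j • lop n j)) = 0 := by
    rw [two_smul]; exact h2
  rcases smul_eq_zero.mp h3 with h | h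
  · exact absurd h two_ne_zero
  · exact h

/-- representation of the exterior algebra on the model space -/
def rho : ExteriorAlgebra ℚ (Fin n → ℚ) →ₐ[ℚ] Module.End ℚ (Finset (Fin n) →₀ ℚ) :=
  ExteriorAlgebra.lift ℚ ⟨phi n, phi_sq n⟩

lemma rho_gen (i : Fin n) : rho n (gen n i) = lop n i := by
  rw [rho, gen, ExteriorAlgebra.lift_ι_apply, phi_apply]
  rw [Finset.sum_eq_single i]
  · rw [Pi.single_eq_same, one_smul]
  · intro j _ hj
    rw [Pi.single_eq_of_ne hj, zero_smul]
  · intro h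
    exact absurd (Finset.mem_univ i) h

lemma rho_wl (l : List (Fin n)) (hl : l.Pairwise (· < ·)) :
    rho n (wl n l) (Finsupp.single ∅ 1) = Finsupp.single l.toFinset 1 := by
  induction l with
  | nil => simp [wl]
  | cons t l ih =>
    have hrest : ∀ b ∈ l, t < b := fun b hb => List.rel_of_pairwise_cons hl hb
    have htl : t ∉ l.toFinset := fun h => lt_irrefl t (hrest t (List.mem_toFinset.mp h))
    rw [wl_cons, map_mul, Module.End.mul_apply, ih hl.of_cons, rho_gen, lop_single,
      if_neg htl]
    have hfil : l.toFinset.filter (· < t) = ∅ := by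
      rw [Finset.filter_eq_empty_iff]
      intro b hb
      exact asymm (hrest b (List.mem_toFinset.mp hb))
    rw [sg, hfil, Finset.card_empty, pow_zero, mul_one, one_smul, List.toFinset_cons]

/-- evaluation at the vacuum vector -/
def evalE : ExteriorAlgebra ℚ (Fin n → ℚ) →ₗ[ℚ] (Finset (Fin n) →₀ ℚ) where
  toFun a := rho n a (Finsupp.single ∅ 1)
  map_add' a b := by simp
  map_smul' c a := by simp

lemma evalE_xS (T : Finset (Fin n)) : evalE n (xS n T) = Finsupp.single T 1 := by
  show rho n (xS n T) (Finsupp.single ∅ 1) = _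
  rw [xS, rho_wl n _ (Finset.sortedLT_sort T).pairwise, Finset.sort_toFinset]

lemma xS_linearIndependent : LinearIndependent ℚ (xS n) := by
  apply LinearIndependent.of_comp (evalE n)
  have he : (evalE n ∘ xS n) = fun T => Finsupp.single T (1 : ℚ) :=
    funext fun T => evalE_xS n T
  rw [he]
  have := (Finsupp.basisSingleOne (R := ℚ) (ι := Finset (Fin n))).linearIndependent
  simpa [Finsupp.coe_basisSingleOne] using this

lemma gen_mul_wl_mem : ∀ (N : ℕ) (i : Fin n) (l : List (Fin n)),
    l.length * n + i.val < N → l.Pairwise (· < ·) →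
    gen n i * wl n l ∈ span ℚ (xS n '' {U : Finset (Fin n) | U.card ≤ l.length + 1}) := by
  intro N
  induction N with
  | zero => intro i l h; omega
  | succ N ih =>
    intro i l hm hl
    match l with
    | [] =>
      rw [wl_nil, mul_one]
      exact subset_span ⟨{i}, by simp, xS_singleton n i⟩
    | t :: l' =>
      rcases lt_trichotomy i t with hit | heq | hti
      · have hs : (i :: t :: l').Pairwise (· < ·) := by
          rw [List.pairwise_cons]
          refine ⟨?_, hl⟩
          intro b hb
          rcases List.mem_cons.mp hb with rfl | hb
          · exact hit
          · exact hit.trans (List.rel_of_pairwise_cons hl hb)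
        rw [← wl_cons, wl_eq_xS n _ hs]
        refine subset_span ⟨(i :: t :: l').toFinset, ?_, rfl⟩
        have : (i :: t :: l').toFinset.card ≤ (i :: t :: l').length :=
          List.toFinset_card_le _
        simpa using this
      · subst heq
        rw [wl_cons, ← mul_assoc, show gen n i * gen n i = 0 from ExteriorAlgebra.ι_sq_zero _, zero_mul]
        exact zero_mem _
      · rw [wl_cons, ← mul_assoc]
        have hswap : gen n i * gen n t = -(gen n t * gen n i) :=
          eq_neg_of_add_eq_zero_left (ExteriorAlgebra.ι_add_mul_swap _ _)
        rw [hswap, neg_mul, mul_assoc]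
        apply neg_mem
        have h1 : gen n i * wl n l' ∈
            span ℚ (xS n '' {U : Finset (Fin n) | U.card ≤ l'.length + 1}) := by
          apply ih i l' ?_ hl.of_cons
          have hexp : (t :: l').length * n = l'.length * n + n := by
            rw [List.length_cons, Nat.succ_mul]
          have hn : i.val < n := i.isLt
          omega
        have hmul : ∀ z ∈ span ℚ (xS n '' {U : Finset (Fin n) | U.card ≤ l'.length + 1}),
            gen n t * z ∈
              span ℚ (xS n '' {U : Finset (Fin n) | U.card ≤ (t :: l').length + 1}) := by
          intro z hz
          induction hz using Submodule.span_induction with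
          | mem x hx =>
            obtain ⟨U, hU, rfl⟩ := hx
            have hUcard : U.card ≤ l'.length + 1 := hU
            have hcall : gen n t * wl n (U.sort (· ≤ ·)) ∈
                span ℚ (xS n '' {W : Finset (Fin n) | W.card ≤ (U.sort (· ≤ ·)).length + 1}) := by
              apply ih t _ ?_ (Finset.sortedLT_sort U).pairwise
              rw [Finset.length_sort]
              have h3 : U.card * n ≤ (l'.length + 1) * n := Nat.mul_le_mul_right n hUcard
              have h4 : t.val < i.val := hti
              have h5 : (t :: l').length * n + i.val < N + 1 := hm
              simp only [List.length_cons] at h5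
              omega
            refine span_mono (Set.image_mono ?_) hcall
            intro W hW
            simp only [Set.mem_setOf_eq, Finset.length_sort] at hW ⊢
            simp only [List.length_cons]
            omega
          | zero => rw [mul_zero]; exact zero_mem _
          | add x y _ _ hx hy => rw [mul_add]; exact add_mem hx hy
          | smul c x _ hx => rw [mul_smul_comm]; exact smul_mem _ _ hx
        exact hmul _ h1

lemma xS_span : ⊤ ≤ span ℚ (Set.range (xS n)) := by
  set S := span ℚ (Set.range (xS n)) with hS
  have key : ∀ (i : Fin n) (U : Finset (Fin n)), gen n i * xS n U ∈ S := by
    intro i U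
    have := gen_mul_wl_mem n (U.card * n + i.val + 1) i (U.sort (· ≤ ·))
      (by rw [Finset.length_sort]; omega) (Finset.sortedLT_sort U).pairwise
    exact span_mono (Set.image_subset_range _ _) this
  have hmul : ∀ a : ExteriorAlgebra ℚ (Fin n → ℚ), ∀ s ∈ S, a * s ∈ S := by
    intro a
    induction a using ExteriorAlgebra.induction with
    | algebraMap r =>
      intro s hs
      rw [Algebra.algebraMap_eq_smul_one, smul_mul_assoc, one_mul]
      exact smul_mem _ _ hs
    | ι m =>
      intro s hs
      have hgen_s : ∀ i : Fin n, gen n i * s ∈ S := by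
        intro i
        induction hs using Submodule.span_induction with
        | mem x hx =>
          obtain ⟨U, rfl⟩ := hx
          exact key i U
        | zero => rw [mul_zero]; exact zero_mem _
        | add x y _ _ hx hy => rw [mul_add]; exact add_mem hx hy
        | smul c x _ hx => rw [mul_smul_comm]; exact smul_mem _ _ hx
      have hm : ExteriorAlgebra.ι ℚ m = ∑ i : Fin n, m i • gen n i := by
        conv_lhs => rw [show m = ∑ i : Fin n, Pi.single i (m i) from (Finset.univ_sum_single m).symm]
        rw [map_sum]
        refine Finset.sum_congr rfl fun i _ => ?_
        rw [gen, ← map_smul]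
        congr 1
        rw [← Pi.single_smul, smul_eq_mul, mul_one]
      rw [hm, Finset.sum_mul]
      exact sum_mem fun i _ => by
        rw [smul_mul_assoc]
        exact smul_mem _ _ (hgen_s i)
    | mul a b ha hb =>
      intro s hs
      rw [mul_assoc]
      exact ha _ (hb s hs)
    | add a b ha hb =>
      intro s hs
      rw [add_mul]
      exact add_mem (ha s hs) (hb s hs)
  intro a _
  have := hmul a (xS n ∅) (subset_span ⟨∅, rfl⟩)
  rwa [xS_empty, mul_one] at this

/-- the monomial basis of the exterior algebra -/
def basA : Basis (Finset (Fin n)) ℚ (ExteriorAlgebra ℚ (Fin n → ℚ)) :=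
  Basis.mk (xS_linearIndependent n) (xS_span n)

@[simp] lemma basA_apply (T : Finset (Fin n)) : basA n T = xS n T := Basis.mk_apply _ _ _

lemma wl_mem_power (l : List (Fin n)) : wl n l ∈ ⋀[ℚ]^(l.length) (Fin n → ℚ) := by
  induction l with
  | nil =>
    rw [wl_nil, List.length_nil]
    show (1 : ExteriorAlgebra ℚ (Fin n → ℚ)) ∈ LinearMap.range (ExteriorAlgebra.ι ℚ (M := Fin n → ℚ)) ^ 0
    rw [pow_zero]
    exact Submodule.one_le.mp le_rfl
  | cons t l ih =>
    rw [wl_cons, List.length_cons]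
    show _ ∈ LinearMap.range (ExteriorAlgebra.ι ℚ (M := Fin n → ℚ)) ^ (l.length + 1)
    rw [pow_succ']
    exact Submodule.mul_mem_mul (LinearMap.mem_range_self _ _) ih

lemma wl_mem_grading (𝒜 : ℕ → Submodule ℚ (ExteriorAlgebra ℚ (Fin n → ℚ))) [GradedAlgebra 𝒜]
    (d : Fin n → ℕ) (hgen : ∀ i, ExteriorAlgebra.ι ℚ (Pi.single i 1) ∈ 𝒜 (d i))
    (l : List (Fin n)) : wl n l ∈ 𝒜 ((l.map d).sum) := by
  induction l with
  | nil =>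
    rw [wl_nil, List.map_nil, List.sum_nil]
    exact SetLike.one_mem_graded 𝒜
  | cons t l ih =>
    rw [wl_cons, List.map_cons, List.sum_cons]
    exact SetLike.mul_mem_graded (hgen t) ih

/-- total degree of a monomial -/
def wdeg (d : Fin n → ℕ) (T : Finset (Fin n)) : ℕ := ∑ i ∈ T, d i

lemma sort_map_sum (d : Fin n → ℕ) (T : Finset (Fin n)) :
    (((T.sort (· ≤ ·)).map d).sum) = wdeg n d T := by
  have h1 : (T.sort (· ≤ ·) : Multiset (Fin n)) = T.val := Finset.sort_eq T _
  rw [wdeg, Finset.sum]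
  rw [← h1, ← Multiset.sum_coe, ← Multiset.map_coe]

lemma xS_mem_grading (𝒜 : ℕ → Submodule ℚ (ExteriorAlgebra ℚ (Fin n → ℚ))) [GradedAlgebra 𝒜]
    (d : Fin n → ℕ) (hgen : ∀ i, ExteriorAlgebra.ι ℚ (Pi.single i 1) ∈ 𝒜 (d i))
    (T : Finset (Fin n)) : xS n T ∈ 𝒜 (wdeg n d T) := by
  rw [← sort_map_sum n d T]
  exact wl_mem_grading n 𝒜 d hgen _

lemma xS_mem_power (T : Finset (Fin n)) : xS n T ∈ ⋀[ℚ]^(T.card) (Fin n → ℚ) := by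
  have := wl_mem_power n (T.sort (· ≤ ·))
  rwa [Finset.length_sort] at this

lemma xS_mul_mem_power (T U : Finset (Fin n)) :
    xS n T * xS n U ∈ ⋀[ℚ]^(T.card + U.card) (Fin n → ℚ) := by
  have heq : xS n T * xS n U = wl n (T.sort (· ≤ ·) ++ U.sort (· ≤ ·)) := by
    rw [wl, List.map_append, List.prod_append]; rfl
  have := wl_mem_power n (T.sort (· ≤ ·) ++ U.sort (· ≤ ·))
  rw [List.length_append, Finset.length_sort, Finset.length_sort] at this
  rwa [heq]

section Bside

variable {B : Type*} [Ring B] [Algebra ℚ B] [Nontrivial B]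
variable (ℬ : ℕ → Submodule ℚ B)

lemma one_mem_B0 (hB0 : ℬ 0 = (1 : Submodule ℚ B)) : (1 : B) ∈ ℬ 0 := by
  rw [hB0, Submodule.one_eq_span]
  exact Submodule.mem_span_singleton_self 1

/-- basis of the degree-zero part -/
def bZero (hB0 : ℬ 0 = (1 : Submodule ℚ B)) : Basis PUnit ℚ (ℬ 0) := by
  refine Basis.mk (v := fun _ => ⟨1, one_mem_B0 ℬ hB0⟩) ?_ ?_
  · apply linearIndependent_unique_iff.mpr
    intro h
    have : (1 : B) = 0 := congrArg Subtype.val h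
    exact one_ne_zero this
  · rintro ⟨x, hx⟩ -
    have hx' : x ∈ Submodule.span ℚ {(1 : B)} := by
      rw [← Submodule.one_eq_span, ← hB0]; exact hx
    obtain ⟨c, hc⟩ := Submodule.mem_span_singleton.mp hx'
    have heq : (⟨x, hx⟩ : ℬ 0) = c • ⟨1, one_mem_B0 ℬ hB0⟩ := Subtype.ext (by simpa using hc.symm)
    rw [heq]
    exact Submodule.smul_mem _ c (Submodule.subset_span ⟨PUnit.unit, rfl⟩)

lemma bZero_apply (hB0 : ℬ 0 = (1 : Submodule ℚ B)) (j : PUnit) :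
    (bZero ℬ hB0 j : B) = 1 := by
  rw [bZero, Basis.mk_apply]

/-- index types for the graded basis of `B` -/
def κB : ℕ → Type _ := fun q =>
  match q with
  | 0 => PUnit
  | (q + 1) => Basis.ofVectorSpaceIndex ℚ (ℬ (q + 1))

/-- basis of each graded piece of `B` -/
def basBGr (hB0 : ℬ 0 = (1 : Submodule ℚ B)) : ∀ q, Basis (κB ℬ q) ℚ (ℬ q) := fun q =>
  match q with
  | 0 => bZero ℬ hB0
  | (q + 1) => Basis.ofVectorSpace ℚ (ℬ (q + 1))

/-- graded basis of `B` -/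
def basB [GradedAlgebra ℬ] (hB0 : ℬ 0 = (1 : Submodule ℚ B)) : Basis (Σ q, κB ℬ q) ℚ B :=
  (DirectSum.Decomposition.isInternal ℬ).collectedBasis (basBGr ℬ hB0)

lemma basB_mem [GradedAlgebra ℬ] (hB0 : ℬ 0 = (1 : Submodule ℚ B)) (k : Σ q, κB ℬ q) :
    basB ℬ hB0 k ∈ ℬ k.1 :=
  (DirectSum.Decomposition.isInternal ℬ).collectedBasis_mem _ k

lemma basB_k0 [GradedAlgebra ℬ] (hB0 : ℬ 0 = (1 : Submodule ℚ B)) :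
    basB ℬ hB0 ⟨0, PUnit.unit⟩ = 1 := by
  rw [basB]
  rw [show ((DirectSum.Decomposition.isInternal ℬ).collectedBasis (basBGr ℬ hB0)) ⟨0, PUnit.unit⟩
    = ((basBGr ℬ hB0 0) PUnit.unit : B) from congrFun
      ((DirectSum.Decomposition.isInternal ℬ).collectedBasis_coe (basBGr ℬ hB0)) _]
  exact bZero_apply ℬ hB0 _

lemma basB_deg0 (k : Σ q, κB ℬ q) (h : k.1 = 0) : k = ⟨0, PUnit.unit⟩ := by
  rcases k with ⟨q, j⟩
  subst h
  rfl

end Bside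


end Paper
end Auxiliary


open scoped TensorProduct

/-- Lemma 3.1 of the paper. Let `A = Λ_ℚ(x_1,…,x_n)` be a rational exterior
algebra on generators of odd degrees, `B` a finite-dimensional nonnegatively graded ℚ-algebra
with `B^0 = ℚ·1` and no odd part, and `F` a graded ring endomorphism of `A ⊗ B` (w.r.t. the
tensor-product grading).  With `ε_A, ε_B` the degree-zero projections (characterized by
`ε 1 = 1` and vanishing in positive degrees), `ι_A, ι_B` the canonical inclusions and
`π_A, π_B` the maps `a ⊗ b ↦ ε_B(b)·a`, `a ⊗ b ↦ ε_A(a)·b`, we have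
`tr F = tr (π_A ∘ F ∘ ι_A) · tr (π_B ∘ F ∘ ι_B)`. -/
theorem trace_eq_trace_mul_trace_of_graded_tensor
    (n : ℕ) [Module.Finite ℚ (ExteriorAlgebra ℚ (Fin n → ℚ))]
    (d : Fin n → ℕ) (hd : ∀ i, Odd (d i))
    (𝒜 : ℕ → Submodule ℚ (ExteriorAlgebra ℚ (Fin n → ℚ))) [GradedAlgebra 𝒜]
    (hgen : ∀ i, ExteriorAlgebra.ι ℚ (Pi.single i 1) ∈ 𝒜 (d i))
    {B : Type*} [Ring B] [Algebra ℚ B] [Module.Finite ℚ B]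
    (ℬ : ℕ → Submodule ℚ B) [GradedAlgebra ℬ]
    (hB0 : ℬ 0 = (1 : Submodule ℚ B))
    (hBodd : ∀ m, Odd m → ℬ m = ⊥)
    (F : (ExteriorAlgebra ℚ (Fin n → ℚ)) ⊗[ℚ] B →ₐ[ℚ] (ExteriorAlgebra ℚ (Fin n → ℚ)) ⊗[ℚ] B)
    (hF : ∀ m, ∀ z ∈ Paper.tensorGrading 𝒜 ℬ m, F z ∈ Paper.tensorGrading 𝒜 ℬ m)
    (εA : ExteriorAlgebra ℚ (Fin n → ℚ) →ₗ[ℚ] ℚ) (hεA1 : εA 1 = 1)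
    (hεA0 : ∀ m, m ≠ 0 → ∀ a ∈ 𝒜 m, εA a = 0)
    (εB : B →ₗ[ℚ] ℚ) (hεB1 : εB 1 = 1)
    (hεB0 : ∀ m, m ≠ 0 → ∀ b ∈ ℬ m, εB b = 0) :
    LinearMap.trace ℚ _ F.toLinearMap
      = LinearMap.trace ℚ _ (Paper.projLeft εB ∘ₗ F.toLinearMap ∘ₗ Paper.inclLeft)
        * LinearMap.trace ℚ _ (Paper.projRight εA ∘ₗ F.toLinearMap ∘ₗ Paper.inclRight) := by
  classical
  rcases subsingleton_or_nontrivial B with hBtriv | hBnt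
  · have h10 : (1 : ExteriorAlgebra ℚ (Fin n → ℚ) ⊗[ℚ] B) = 0 := by
      rw [Algebra.TensorProduct.one_def, Subsingleton.elim (1 : B) 0, TensorProduct.tmul_zero]
    haveI hTS : Subsingleton (ExteriorAlgebra ℚ (Fin n → ℚ) ⊗[ℚ] B) :=
      subsingleton_of_zero_eq_one h10.symm
    have hF0 : F.toLinearMap = 0 := LinearMap.ext fun z => Subsingleton.elim _ _
    have hfl : Paper.projLeft εB ∘ₗ F.toLinearMap ∘ₗ Paper.inclLeft
        = (0 : ExteriorAlgebra ℚ (Fin n → ℚ) →ₗ[ℚ] ExteriorAlgebra ℚ (Fin n → ℚ)) := by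
      apply LinearMap.ext
      intro a
      simp only [LinearMap.comp_apply, LinearMap.zero_apply]
      rw [Subsingleton.elim (F.toLinearMap (Paper.inclLeft a)) 0, map_zero]
    rw [hfl, hF0, map_zero, map_zero, zero_mul]
  · haveI : FiniteDimensional ℚ B := ‹Module.Finite ℚ B›
    haveI : Fintype (Σ q, Paper.κB ℬ q) := FiniteDimensional.fintypeBasisIndex (Paper.basB ℬ hB0)
    set bB := Paper.basB ℬ hB0 with hbB
    set bT := (Paper.basA n).tensorProduct bB with hbTdef
    set k0 : (Σ q, Paper.κB ℬ q) := ⟨0, PUnit.unit⟩ with hk0def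
    -- no odd degrees occur in the basis of B
    have hkodd : ∀ k : Σ q, Paper.κB ℬ q, ¬ Odd k.1 := by
      intro k hodd
      have h1 : (bB k : B) ∈ ℬ k.1 := Paper.basB_mem ℬ hB0 k
      rw [hBodd _ hodd, Submodule.mem_bot] at h1
      exact bB.ne_zero k h1
    -- support lemmas
    have hspanA : ∀ p, ∀ z ∈ 𝒜 p,
        z ∈ Submodule.span ℚ ((Paper.basA n) '' {T | Paper.wdeg n d T = p}) := by
      intro p z hz
      refine Paper.subgrading_mem 𝒜 (fun p => Submodule.span ℚ ((Paper.basA n) '' {T | Paper.wdeg n d T = p})) ?_ ?_ hz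
      · intro p
        rw [Submodule.span_le]
        rintro _ ⟨T, hT, rfl⟩
        rw [Paper.basA_apply]
        exact hT ▸ Paper.xS_mem_grading n 𝒜 d hgen T
      · rw [eq_top_iff, ← (Paper.basA n).span_eq, Submodule.span_le]
        rintro _ ⟨T, rfl⟩
        exact Submodule.mem_iSup_of_mem (Paper.wdeg n d T) (Submodule.subset_span ⟨T, rfl, rfl⟩)
    have hspanLam : ∀ p, ∀ z ∈ ⋀[ℚ]^p (Fin n → ℚ),
        z ∈ Submodule.span ℚ ((Paper.basA n) '' {T | T.card = p}) := by
      intro p z hz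
      refine Paper.subgrading_mem (fun i : ℕ => ⋀[ℚ]^i (Fin n → ℚ))
        (fun p => Submodule.span ℚ ((Paper.basA n) '' {T | T.card = p})) ?_ ?_ hz
      · intro p
        rw [Submodule.span_le]
        rintro _ ⟨T, hT, rfl⟩
        rw [Paper.basA_apply]
        exact hT ▸ Paper.xS_mem_power n T
      · rw [eq_top_iff, ← (Paper.basA n).span_eq, Submodule.span_le]
        rintro _ ⟨T, rfl⟩
        exact Submodule.mem_iSup_of_mem T.card (Submodule.subset_span ⟨T, rfl, rfl⟩)
    have hspanB : ∀ q, ∀ z ∈ ℬ q,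
        z ∈ Submodule.span ℚ (bB '' {k : Σ q, Paper.κB ℬ q | k.1 = q}) := by
      intro q z hz
      refine Paper.subgrading_mem ℬ
        (fun q => Submodule.span ℚ (bB '' {k : Σ q, Paper.κB ℬ q | k.1 = q})) ?_ ?_ hz
      · intro q
        rw [Submodule.span_le]
        rintro _ ⟨k, hk, rfl⟩
        exact hk ▸ Paper.basB_mem ℬ hB0 k
      · rw [eq_top_iff, ← bB.span_eq, Submodule.span_le]
        rintro _ ⟨k, rfl⟩
        exact Submodule.mem_iSup_of_mem k.1 (Submodule.subset_span ⟨k, rfl, rfl⟩)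
    have hsuppLam : ∀ (p : ℕ) (z), z ∈ ⋀[ℚ]^p (Fin n → ℚ) →
        ∀ T : Finset (Fin n), T.card ≠ p → (Paper.basA n).repr z T = 0 := by
      intro p z hz T hT
      exact Paper.repr_eq_zero_of_mem_span (Paper.basA n) (hspanLam p z hz) hT
    have hsuppT : ∀ (m : ℕ) (z), z ∈ Paper.tensorGrading 𝒜 ℬ m →
        ∀ (T : Finset (Fin n)) (k : Σ q, Paper.κB ℬ q),
          Paper.wdeg n d T + k.1 ≠ m → bT.repr z (T, k) = 0 := by
      intro m z hz T k hne
      refine Paper.repr_eq_zero_of_mem_span bT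
        (Paper.tensorGrading_le_span (Paper.basA n) bB 𝒜 ℬ (Paper.wdeg n d) (Sigma.fst) hspanA hspanB m hz) hne
    -- the filtration by exterior length
    set NN : ℕ → Submodule ℚ (ExteriorAlgebra ℚ (Fin n → ℚ) ⊗[ℚ] B) :=
      fun ℓ => Submodule.span ℚ (bT '' {pk : Finset (Fin n) × (Σ q, Paper.κB ℬ q) | ℓ ≤ pk.1.card}) with hNNdef
    have hNNsupp : ∀ (ℓ : ℕ) (z), z ∈ NN ℓ →
        ∀ (T : Finset (Fin n)) (k : Σ q, Paper.κB ℬ q), T.card < ℓ → bT.repr z (T, k) = 0 := by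
      intro ℓ z hz T k hc
      refine Paper.repr_eq_zero_of_mem_span bT hz ?_
      simp only [Set.mem_setOf_eq]
      omega
    have hNNofsupp : ∀ (ℓ : ℕ) (z),
        (∀ (T : Finset (Fin n)) (k : Σ q, Paper.κB ℬ q), T.card < ℓ → bT.repr z (T, k) = 0) →
        z ∈ NN ℓ := by
      intro ℓ z h
      refine Paper.mem_span_of_repr_eq_zero bT ?_
      rintro ⟨T, k⟩ hj
      simp only [Set.mem_setOf_eq, not_le] at hj
      exact h T k hj
    have hmulNN : ∀ (a b : ℕ) (z), z ∈ NN a → ∀ w ∈ NN b, z * w ∈ NN (a + b) := by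
      intro a b z hz
      induction hz using Submodule.span_induction with
      | mem x hx =>
        obtain ⟨⟨T, l⟩, hTl, rfl⟩ := hx
        intro w hw
        induction hw using Submodule.span_induction with
        | mem y hy =>
          obtain ⟨⟨U, m⟩, hUm, rfl⟩ := hy
          refine hNNofsupp _ _ ?_
          intro W k' hcard
          rw [Module.Basis.tensorProduct_apply, Module.Basis.tensorProduct_apply,
            Algebra.TensorProduct.tmul_mul_tmul, Module.Basis.tensorProduct_repr_tmul_apply]
          have hz0 : (Paper.basA n).repr (Paper.basA n T * Paper.basA n U) W = 0 := by
            refine hsuppLam (T.card + U.card) _ ?_ W ?_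
            · rw [Paper.basA_apply, Paper.basA_apply]
              exact Paper.xS_mul_mem_power n T U
            · have h1 : a ≤ T.card := hTl
              have h2 : b ≤ U.card := hUm
              omega
          rw [hz0, smul_zero]
        | zero => rw [mul_zero]; exact Submodule.zero_mem _
        | add x y _ _ hx hy => rw [mul_add]; exact Submodule.add_mem _ hx hy
        | smul c x _ hx => rw [mul_smul_comm]; exact Submodule.smul_mem _ _ hx
      | zero => intro w hw; rw [zero_mul]; exact Submodule.zero_mem _
      | add x y _ _ hx hy =>
        intro w hw
        rw [add_mul]
        exact Submodule.add_mem _ (hx w hw) (hy w hw)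
      | smul c x _ hx =>
        intro w hw
        rw [smul_mul_assoc]
        exact Submodule.smul_mem _ _ (hx w hw)
    have h1NN : (1 : ExteriorAlgebra ℚ (Fin n → ℚ) ⊗[ℚ] B) ∈ NN 0 := by
      have h1eq : (1 : ExteriorAlgebra ℚ (Fin n → ℚ) ⊗[ℚ] B) = bT (∅, k0) := by
        rw [Module.Basis.tensorProduct_apply, Paper.basA_apply, Paper.xS_empty, hk0def,
          Paper.basB_k0 ℬ hB0, Algebra.TensorProduct.one_def]
      rw [h1eq]
      exact Submodule.subset_span ⟨(∅, k0), by simp, rfl⟩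
    -- membership of the images of the generators
    have hgen1 : ∀ i : Fin n, (Paper.gen n i ⊗ₜ[ℚ] (1 : B)) ∈ Paper.tensorGrading 𝒜 ℬ (d i) := by
      intro i
      have := Paper.tmul_mem_tensorGrading 𝒜 ℬ (hgen i) (Paper.one_mem_B0 ℬ hB0)
      simpa [Paper.gen] using this
    have hFgen : ∀ i : Fin n, F (Paper.gen n i ⊗ₜ[ℚ] (1 : B)) ∈ NN 1 := by
      intro i
      refine hNNofsupp 1 _ ?_
      intro T k hcard
      have hT : T = ∅ := Finset.card_eq_zero.mp (by omega)
      subst hT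
      refine hsuppT (d i) _ (hF _ _ (hgen1 i)) ∅ k ?_
      intro heq
      have hw0 : Paper.wdeg n d ∅ = 0 := Finset.sum_empty
      rw [hw0, zero_add] at heq
      exact hkodd k (heq ▸ hd i)
    have huL : ∀ l : List (Fin n), F ((Paper.wl n l) ⊗ₜ[ℚ] (1 : B)) ∈ NN l.length := by
      intro l
      induction l with
      | nil =>
        rw [Paper.wl_nil, ← Algebra.TensorProduct.one_def, map_one]
        exact h1NN
      | cons t l ih =>
        have heq : (Paper.wl n (t :: l)) ⊗ₜ[ℚ] (1 : B)
            = (Paper.gen n t ⊗ₜ[ℚ] (1 : B)) * ((Paper.wl n l) ⊗ₜ[ℚ] (1 : B)) := by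
          rw [Algebra.TensorProduct.tmul_mul_tmul, one_mul, Paper.wl_cons]
        rw [heq, map_mul, List.length_cons, Nat.add_comm l.length 1]
        exact hmulNN 1 l.length _ (hFgen t) _ ih
    have huS : ∀ S : Finset (Fin n), F ((Paper.xS n S) ⊗ₜ[ℚ] (1 : B)) ∈ NN S.card := by
      intro S
      have := huL (S.sort (· ≤ ·))
      rwa [Finset.length_sort] at this
    have hxStG : ∀ S : Finset (Fin n),
        (Paper.xS n S) ⊗ₜ[ℚ] (1 : B) ∈ Paper.tensorGrading 𝒜 ℬ (Paper.wdeg n d S) := by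
      intro S
      have := Paper.tmul_mem_tensorGrading 𝒜 ℬ (Paper.xS_mem_grading n 𝒜 d hgen S)
        (Paper.one_mem_B0 ℬ hB0)
      simpa using this
    have hbktG : ∀ k : Σ q, Paper.κB ℬ q,
        ((1 : ExteriorAlgebra ℚ (Fin n → ℚ)) ⊗ₜ[ℚ] (bB k : B)) ∈ Paper.tensorGrading 𝒜 ℬ k.1 := by
      intro k
      have := Paper.tmul_mem_tensorGrading 𝒜 ℬ (SetLike.one_mem_graded 𝒜) (Paper.basB_mem ℬ hB0 k)
      simpa using this
    -- augmentation values on basis vectors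
    have hwpos : ∀ U : Finset (Fin n), U ≠ ∅ → Paper.wdeg n d U ≠ 0 := by
      intro U hU
      have hpos : 0 < Paper.wdeg n d U := by
        refine Finset.sum_pos (fun i _ => ?_) (Finset.nonempty_of_ne_empty hU)
        rcases hd i with ⟨c, hc⟩
        omega
      omega
    have hεAx : ∀ U : Finset (Fin n), εA (Paper.xS n U) = if U = ∅ then 1 else 0 := by
      intro U
      by_cases hU : U = ∅
      · rw [if_pos hU, hU, Paper.xS_empty, hεA1]
      · rw [if_neg hU]
        exact hεA0 _ (hwpos U hU) _ (Paper.xS_mem_grading n 𝒜 d hgen U)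
    have hεBb : ∀ k : Σ q, Paper.κB ℬ q, εB (bB k) = if k = k0 then 1 else 0 := by
      intro k
      by_cases hk : k = k0
      · rw [if_pos hk, hk, hk0def, Paper.basB_k0 ℬ hB0, hεB1]
      · rw [if_neg hk]
        have hk1 : k.1 ≠ 0 := by
          intro h0
          exact hk (Paper.basB_deg0 ℬ k h0)
        exact hεB0 _ hk1 _ (Paper.basB_mem ℬ hB0 k)
    -- the two projection formulas
    have hPL : ∀ (z : ExteriorAlgebra ℚ (Fin n → ℚ) ⊗[ℚ] B) (T : Finset (Fin n)),
        (Paper.basA n).repr (Paper.projLeft εB z) T = bT.repr z (T, k0) := by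
      intro z T
      have hmaps : (Finsupp.lapply T : (Finset (Fin n) →₀ ℚ) →ₗ[ℚ] ℚ)
            ∘ₗ ((Paper.basA n).repr.toLinearMap ∘ₗ Paper.projLeft εB)
          = (Finsupp.lapply (T, k0) : (Finset (Fin n) × (Σ q, Paper.κB ℬ q) →₀ ℚ) →ₗ[ℚ] ℚ)
            ∘ₗ bT.repr.toLinearMap := by
        apply bT.ext
        rintro ⟨U, l⟩
        simp only [LinearMap.comp_apply, LinearEquiv.coe_coe, Finsupp.lapply_apply]
        rw [Module.Basis.tensorProduct_apply]
        have hproj : Paper.projLeft εB ((Paper.basA n U) ⊗ₜ[ℚ] (bB l : B))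
            = εB (bB l) • Paper.basA n U := by
          rw [Paper.projLeft]
          simp only [LinearMap.comp_apply, TensorProduct.map_tmul, LinearMap.id_apply,
            LinearEquiv.coe_coe, TensorProduct.rid_tmul]
        rw [hproj, map_smul, Finsupp.smul_apply, Module.Basis.repr_self,
          Module.Basis.tensorProduct_repr_tmul_apply, Module.Basis.repr_self, Module.Basis.repr_self,
          smul_eq_mul, smul_eq_mul, hεBb l]
        by_cases hl : l = k0 <;> by_cases hUT : U = T <;>
          simp [hl, hUT, Finsupp.single_apply]
      exact LinearMap.congr_fun hmaps z
    have hPR : ∀ (z : ExteriorAlgebra ℚ (Fin n → ℚ) ⊗[ℚ] B) (k : Σ q, Paper.κB ℬ q),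
        bB.repr (Paper.projRight εA z) k = bT.repr z (∅, k) := by
      intro z k
      have hmaps : (Finsupp.lapply k : ((Σ q, Paper.κB ℬ q) →₀ ℚ) →ₗ[ℚ] ℚ)
            ∘ₗ (bB.repr.toLinearMap ∘ₗ Paper.projRight εA)
          = (Finsupp.lapply (∅, k) : (Finset (Fin n) × (Σ q, Paper.κB ℬ q) →₀ ℚ) →ₗ[ℚ] ℚ)
            ∘ₗ bT.repr.toLinearMap := by
        apply bT.ext
        rintro ⟨U, l⟩
        simp only [LinearMap.comp_apply, LinearEquiv.coe_coe, Finsupp.lapply_apply]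
        rw [Module.Basis.tensorProduct_apply]
        have hproj : Paper.projRight εA ((Paper.basA n U) ⊗ₜ[ℚ] (bB l : B))
            = εA (Paper.basA n U) • (bB l : B) := by
          rw [Paper.projRight]
          simp only [LinearMap.comp_apply, TensorProduct.map_tmul, LinearMap.id_apply,
            LinearEquiv.coe_coe, TensorProduct.lid_tmul]
        rw [hproj, map_smul, Finsupp.smul_apply, Module.Basis.repr_self,
          Module.Basis.tensorProduct_repr_tmul_apply, Module.Basis.repr_self, Module.Basis.repr_self,
          smul_eq_mul, smul_eq_mul, Paper.basA_apply, hεAx U]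
        by_cases hU : U = ∅ <;> by_cases hlk : l = k <;>
          simp [hU, hlk, Finsupp.single_apply]
      exact LinearMap.congr_fun hmaps z
    have hbBk0 : (bB k0 : B) = 1 := Paper.basB_k0 ℬ hB0
    have hbA0 : (Paper.basA n) ∅ = 1 := by rw [Paper.basA_apply, Paper.xS_empty]
    -- the diagonal entries factor
    have hdiag : ∀ (S : Finset (Fin n)) (k : Σ q, Paper.κB ℬ q),
        bT.repr (F.toLinearMap (bT (S, k))) (S, k)
          = (Paper.basA n).repr
              ((Paper.projLeft εB ∘ₗ F.toLinearMap ∘ₗ Paper.inclLeft) (Paper.basA n S)) S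
            * bB.repr ((Paper.projRight εA ∘ₗ F.toLinearMap ∘ₗ Paper.inclRight) (bB k)) k := by
      intro S k
      have hincl1 : (Paper.inclLeft (Paper.basA n S) : ExteriorAlgebra ℚ (Fin n → ℚ) ⊗[ℚ] B)
          = (Paper.xS n S) ⊗ₜ[ℚ] (1 : B) := by
        rw [Paper.inclLeft, AlgHom.toLinearMap_apply, Algebra.TensorProduct.includeLeft_apply,
          Paper.basA_apply]
      have hincl2 : (Paper.inclRight (bB k : B) : ExteriorAlgebra ℚ (Fin n → ℚ) ⊗[ℚ] B)
          = (1 : ExteriorAlgebra ℚ (Fin n → ℚ)) ⊗ₜ[ℚ] (bB k : B) := by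
        rw [Paper.inclRight, AlgHom.toLinearMap_apply, Algebra.TensorProduct.includeRight_apply]
      simp only [LinearMap.comp_apply]
      rw [hincl1, hincl2, AlgHom.toLinearMap_apply, AlgHom.toLinearMap_apply,
        AlgHom.toLinearMap_apply, hPL, hPR]
      set u := F ((Paper.xS n S) ⊗ₜ[ℚ] (1 : B)) with hudef
      set v := F ((1 : ExteriorAlgebra ℚ (Fin n → ℚ)) ⊗ₜ[ℚ] (bB k : B)) with hvdef
      have hsplit : bT (S, k) = ((Paper.xS n S) ⊗ₜ[ℚ] (1 : B))
          * ((1 : ExteriorAlgebra ℚ (Fin n → ℚ)) ⊗ₜ[ℚ] (bB k : B)) := by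
        rw [Module.Basis.tensorProduct_apply, Algebra.TensorProduct.tmul_mul_tmul, mul_one, one_mul,
          Paper.basA_apply]
      rw [hsplit, map_mul]
      have hutG := hF _ _ (hxStG S)
      have hvtG := hF _ _ (hbktG k)
      have huNN := huS S
      have hterm : ∀ p q : Finset (Fin n) × (Σ q, Paper.κB ℬ q),
          ¬(p = (S, k0) ∧ q = ((∅ : Finset (Fin n)), k)) →
          (bT.repr u p * bT.repr v q) * bT.repr (bT p * bT q) (S, k) = 0 := by
        rintro ⟨T, l⟩ ⟨U, m⟩ hne
        by_cases h1 : bT.repr u (T, l) = 0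
        · rw [h1, zero_mul, zero_mul]
        by_cases h2 : bT.repr v (U, m) = 0
        · rw [h2, mul_zero, zero_mul]
        suffices hz : bT.repr (bT (T, l) * bT (U, m)) (S, k) = 0 by rw [hz, mul_zero]
        have e1 : Paper.wdeg n d T + l.1 = Paper.wdeg n d S := by
          by_contra hne'
          exact h1 (hsuppT _ _ hutG T l hne')
        have e2 : Paper.wdeg n d U + m.1 = k.1 := by
          by_contra hne'
          exact h2 (hsuppT _ _ hvtG U m hne')
        have e3 : S.card ≤ T.card := by
          by_contra hlt
          exact h1 (hNNsupp _ _ huNN T l (by omega))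
        rw [Module.Basis.tensorProduct_apply, Module.Basis.tensorProduct_apply,
          Algebra.TensorProduct.tmul_mul_tmul, Module.Basis.tensorProduct_repr_tmul_apply]
        by_cases h4 : S.card = T.card + U.card
        · have hUe : U = ∅ := Finset.card_eq_zero.mp (by omega)
          subst hUe
          by_cases hTS : T = S
          · subst hTS
            have hwTS : Paper.wdeg n d T + l.1 = Paper.wdeg n d T := e1
            have hl0 : l.1 = 0 := by omega
            have hlk0 : l = k0 := Paper.basB_deg0 ℬ l hl0
            have hmk : m ≠ k := by
              intro hmk
              exact hne ⟨by rw [hlk0], by rw [hmk]⟩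
            rw [hlk0, hbBk0, one_mul, Module.Basis.repr_self, Finsupp.single_apply, if_neg hmk,
              zero_smul]
          · rw [hbA0, mul_one, Module.Basis.repr_self, Finsupp.single_apply, if_neg hTS, smul_zero]
        · rw [hsuppLam (T.card + U.card) _
            (by rw [Paper.basA_apply, Paper.basA_apply]; exact Paper.xS_mul_mem_power n T U) S h4,
            smul_zero]
      have hexp : bT.repr (u * v) (S, k)
          = ∑ p : Finset (Fin n) × (Σ q, Paper.κB ℬ q),
              ∑ q : Finset (Fin n) × (Σ q, Paper.κB ℬ q),
              (bT.repr u p * bT.repr v q) * bT.repr (bT p * bT q) (S, k) := by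
        conv_lhs => rw [← bT.sum_repr u, ← bT.sum_repr v]
        rw [Finset.sum_mul_sum, map_sum, Finsupp.coe_finset_sum, Finset.sum_apply]
        refine Finset.sum_congr rfl fun p _ => ?_
        rw [map_sum, Finsupp.coe_finset_sum, Finset.sum_apply]
        refine Finset.sum_congr rfl fun q _ => ?_
        rw [smul_mul_smul_comm, map_smul, Finsupp.smul_apply, smul_eq_mul]
      have hsum1 : (∑ p : Finset (Fin n) × (Σ q, Paper.κB ℬ q),
            ∑ q : Finset (Fin n) × (Σ q, Paper.κB ℬ q),
            (bT.repr u p * bT.repr v q) * bT.repr (bT p * bT q) (S, k))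
          = ∑ q : Finset (Fin n) × (Σ q, Paper.κB ℬ q),
            (bT.repr u (S, k0) * bT.repr v q) * bT.repr (bT (S, k0) * bT q) (S, k) :=
        Finset.sum_eq_single _ (fun p _ hp => Finset.sum_eq_zero fun q _ =>
          hterm p q (fun h => hp h.1)) (fun h => absurd (Finset.mem_univ _) h)
      have hsum2 : (∑ q : Finset (Fin n) × (Σ q, Paper.κB ℬ q),
            (bT.repr u (S, k0) * bT.repr v q) * bT.repr (bT (S, k0) * bT q) (S, k))
          = (bT.repr u (S, k0) * bT.repr v (∅, k))
            * bT.repr (bT (S, k0) * bT ((∅ : Finset (Fin n)), k)) (S, k) :=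
        Finset.sum_eq_single _ (fun q _ hq => hterm _ q (fun h => hq h.2))
          (fun h => absurd (Finset.mem_univ _) h)
      have hmain : bT (S, k0) * bT ((∅ : Finset (Fin n)), k) = bT (S, k) := by
        rw [Module.Basis.tensorProduct_apply, Module.Basis.tensorProduct_apply, Module.Basis.tensorProduct_apply,
          Algebra.TensorProduct.tmul_mul_tmul, hbA0, mul_one, hbBk0, one_mul]
      rw [hexp, hsum1, hsum2, hmain, Module.Basis.repr_self, Finsupp.single_apply, if_pos rfl, mul_one]
    -- assemble the traces
    rw [LinearMap.trace_eq_matrix_trace ℚ bT F.toLinearMap,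
      LinearMap.trace_eq_matrix_trace ℚ (Paper.basA n)
        (Paper.projLeft εB ∘ₗ F.toLinearMap ∘ₗ Paper.inclLeft),
      LinearMap.trace_eq_matrix_trace ℚ bB
        (Paper.projRight εA ∘ₗ F.toLinearMap ∘ₗ Paper.inclRight)]
    simp only [Matrix.trace, Matrix.diag, LinearMap.toMatrix_apply]
    rw [Finset.sum_mul_sum, Fintype.sum_prod_type]
    exact Finset.sum_congr rfl fun T _ => Finset.sum_congr rfl fun k _ => hdiag T k
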